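/- Let T = wT_φ on C(K) where φ is a homeomorphism of K into itself, and let T' be its adjoint on regular Borel measures. If λ ≠ 0 and there is a sequence of measures μₙ with ‖μₙ‖ = 1 and T'μₙ - λμₙ → 0, then |λ| is an approximate eigenvalue of |T|' where |T| = |w|T_φ; i.e., the approximate point spectrum of T' off zero is invariant under multiplication by unimodular scalars in modulus: |σ_{a.p.}(T') \ {0}| ⊆ σ_{a.p.}(|T|'). -/

import Mathlib

set_option linter.unusedSectionVars false
set_option maxHeartbeats 800000

open Filter Topology

namespace Stmt19Aux

variable {K : Type*} [TopologicalSpace K] [CompactSpace K] [T2Space K]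

/-- Generic "scale down by a ratio of nonneg functions" construction. -/
lemma ratio_smul (v : C(K, ℂ)) (c d : C(K, ℝ)) (hc : ∀ k, 0 ≤ c k)
    (hcd : ∀ k, c k ≤ d k) (hv : ∀ k, ‖v k‖ ≤ d k) :
    ∃ G : C(K, ℂ), (∀ k, ‖G k‖ ≤ c k) ∧ (∀ k, ‖v k - G k‖ ≤ d k - c k) := by
  set Gf : K → ℂ := fun k => if d k = 0 then 0 else ((c k / d k : ℝ) : ℂ) * v k with hGf
  have hbound : ∀ k, ‖Gf k‖ ≤ c k := by
    intro k
    by_cases hd : d k = 0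
    · simp [hGf, hd]; exact hc k
    · have hdpos : 0 < d k := lt_of_le_of_ne ((norm_nonneg (v k)).trans (hv k)) (Ne.symm hd)
      simp only [hGf, hd, if_false, norm_mul, Complex.norm_real]
      rw [Real.norm_eq_abs, abs_of_nonneg (div_nonneg (hc k) hdpos.le)]
      calc c k / d k * ‖v k‖ ≤ c k / d k * d k := by
            exact mul_le_mul_of_nonneg_left (hv k) (div_nonneg (hc k) hdpos.le)
        _ = c k := div_mul_cancel₀ _ hd
  have hcont : Continuous Gf := by
    rw [continuous_iff_continuousAt]
    intro k₀
    by_cases hd : d k₀ = 0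
    · have h0 : Gf k₀ = 0 := by
        have hc0 : c k₀ = 0 := le_antisymm (hd ▸ hcd k₀) (hc k₀)
        by_cases h : d k₀ = 0 <;> simp [hGf, h, hc0]
      rw [ContinuousAt, h0]
      apply squeeze_zero_norm (fun k => (hbound k).trans (hcd k))
      have : Tendsto d (nhds k₀) (nhds (d k₀)) := d.continuous.continuousAt
      rwa [hd] at this
    · have hopen : IsOpen {k | d k ≠ 0} := isOpen_compl_iff.mpr
        (isClosed_eq d.continuous continuous_const)
      have heq : ∀ᶠ k in nhds k₀, Gf k = ((c k / d k : ℝ) : ℂ) * v k := by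
        filter_upwards [hopen.mem_nhds hd] with k hk
        simp [hGf, hk]
      apply ContinuousAt.congr _ (Filter.EventuallyEq.symm heq)
      exact (((Complex.continuous_ofReal.continuousAt).comp
        ((c.continuous.continuousAt).div (d.continuous.continuousAt) hd)).mul
        v.continuous.continuousAt)
  refine ⟨⟨Gf, hcont⟩, hbound, fun k => ?_⟩
  by_cases hd : d k = 0
  · have hv0 : v k = 0 := norm_le_zero_iff.mp (hd ▸ hv k)
    have hc0 : c k = 0 := le_antisymm (hd ▸ hcd k) (hc k)
    simp [hGf, hd, hv0, hc0]
  · have hdpos : 0 < d k := lt_of_le_of_ne ((norm_nonneg (v k)).trans (hv k)) (Ne.symm hd)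
    have : v k - Gf k = ((1 - c k / d k : ℝ) : ℂ) * v k := by
      simp only [hGf, hd, if_false]
      push_cast
      ring
    show ‖v k - Gf k‖ ≤ d k - c k
    rw [this, norm_mul, Complex.norm_real, Real.norm_eq_abs,
      abs_of_nonneg (by rw [sub_nonneg]; exact div_le_one_of_le₀ (hcd k) hdpos.le)]
    calc (1 - c k / d k) * ‖v k‖ ≤ (1 - c k / d k) * d k := by
          apply mul_le_mul_of_nonneg_left (hv k)
          rw [sub_nonneg]; exact div_le_one_of_le₀ (hcd k) hdpos.le
      _ = d k - c k := by field_simp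


/-- The index set for the modulus sup. -/
def SS (μ : StrongDual ℂ C(K, ℂ)) (f : C(K, ℝ)) : Set ℝ :=
  {r | ∃ g : C(K, ℂ), (∀ k, ‖g k‖ ≤ f k) ∧ r = ‖μ g‖}

/-- The modulus of `μ` evaluated at a nonnegative `f`. -/
noncomputable def NN (μ : StrongDual ℂ C(K, ℂ)) (f : C(K, ℝ)) : ℝ :=
  sSup (SS μ f)

lemma SS_le (μ : StrongDual ℂ C(K, ℂ)) (f : C(K, ℝ)) :
    ∀ r ∈ SS μ f, r ≤ ‖μ‖ * ‖f‖ := by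
  rintro r ⟨g, hg, rfl⟩
  calc ‖μ g‖ ≤ ‖μ‖ * ‖g‖ := μ.le_opNorm g
    _ ≤ ‖μ‖ * ‖f‖ := by
        apply mul_le_mul_of_nonneg_left _ (norm_nonneg μ)
        rw [ContinuousMap.norm_le _ (norm_nonneg f)]
        intro k
        exact (hg k).trans ((le_abs_self _).trans (f.norm_coe_le_norm k))

lemma SS_bddAbove (μ : StrongDual ℂ C(K, ℂ)) (f : C(K, ℝ)) :
    BddAbove (SS μ f) := ⟨‖μ‖ * ‖f‖, SS_le μ f⟩

lemma SS_zero_mem (μ : StrongDual ℂ C(K, ℂ)) {f : C(K, ℝ)} (hf : ∀ k, 0 ≤ f k) :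
    (0 : ℝ) ∈ SS μ f :=
  ⟨0, fun k => by simpa using hf k, by simp⟩

lemma NN_nonneg (μ : StrongDual ℂ C(K, ℂ)) {f : C(K, ℝ)} (hf : ∀ k, 0 ≤ f k) :
    0 ≤ NN μ f :=
  le_csSup (SS_bddAbove μ f) (SS_zero_mem μ hf)

lemma NN_le (μ : StrongDual ℂ C(K, ℂ)) {f : C(K, ℝ)} (hf : ∀ k, 0 ≤ f k) :
    NN μ f ≤ ‖μ‖ * ‖f‖ :=
  csSup_le ⟨0, SS_zero_mem μ hf⟩ (SS_le μ f)

lemma NN_mono (μ : StrongDual ℂ C(K, ℂ)) {f₁ f₂ : C(K, ℝ)} (hf₁ : ∀ k, 0 ≤ f₁ k)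
    (h12 : ∀ k, f₁ k ≤ f₂ k) : NN μ f₁ ≤ NN μ f₂ := by
  apply csSup_le_csSup (SS_bddAbove μ f₂) ⟨0, SS_zero_mem μ hf₁⟩
  rintro r ⟨g, hg, rfl⟩
  exact ⟨g, fun k => (hg k).trans (h12 k), rfl⟩

lemma NN_zero (μ : StrongDual ℂ C(K, ℂ)) : NN μ (0 : C(K, ℝ)) = 0 := by
  have : SS μ (0 : C(K, ℝ)) = {0} := by
    ext r
    constructor
    · rintro ⟨g, hg, rfl⟩
      have : g = 0 := ContinuousMap.ext fun k => norm_le_zero_iff.mp (by simpa using hg k)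
      simp [this]
    · rintro rfl
      exact SS_zero_mem μ (by simp)
  rw [NN, this, csSup_singleton]

lemma exists_unimodular (z : ℂ) : ∃ θ : ℂ, ‖θ‖ = 1 ∧ θ * z = (‖z‖ : ℂ) := by
  by_cases hz : z = 0
  · exact ⟨1, by simp [hz]⟩
  · refine ⟨(‖z‖ : ℂ) / z, ?_, div_mul_cancel₀ _ hz⟩
    rw [norm_div, Complex.norm_real, Real.norm_eq_abs, abs_of_nonneg (norm_nonneg z),
      div_self (norm_ne_zero_iff.mpr hz)]

lemma NN_add (μ : StrongDual ℂ C(K, ℂ)) {f₁ f₂ : C(K, ℝ)} (hf₁ : ∀ k, 0 ≤ f₁ k)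
    (hf₂ : ∀ k, 0 ≤ f₂ k) : NN μ (f₁ + f₂) = NN μ f₁ + NN μ f₂ := by
  have hf : ∀ k, 0 ≤ (f₁ + f₂) k := fun k => by
    simp only [ContinuousMap.add_apply]; exact add_nonneg (hf₁ k) (hf₂ k)
  apply le_antisymm
  · apply csSup_le ⟨0, SS_zero_mem μ hf⟩
    rintro r ⟨g, hg, rfl⟩
    obtain ⟨G, hG₁, hG₂⟩ := ratio_smul g f₁ (f₁ + f₂) hf₁
      (fun k => by simp only [ContinuousMap.add_apply]; linarith [hf₂ k])
      (fun k => by simpa using hg k)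
    have : μ g = μ G + μ (g - G) := by rw [← map_add]; congr 1; abel
    calc ‖μ g‖ ≤ ‖μ G‖ + ‖μ (g - G)‖ := by rw [this]; exact norm_add_le _ _
      _ ≤ NN μ f₁ + NN μ f₂ := by
          apply add_le_add
          · exact le_csSup (SS_bddAbove μ f₁) ⟨G, hG₁, rfl⟩
          · refine le_csSup (SS_bddAbove μ f₂) ⟨g - G, fun k => ?_, rfl⟩
            have h1 := hG₂ k
            simp only [ContinuousMap.add_apply] at h1
            simp only [ContinuousMap.sub_apply]
            linarith
  · have key : ∀ r₁ ∈ SS μ f₁, ∀ r₂ ∈ SS μ f₂, r₁ + r₂ ≤ NN μ (f₁ + f₂) := by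
      rintro r₁ ⟨g₁, hg₁, rfl⟩ r₂ ⟨g₂, hg₂, rfl⟩
      obtain ⟨θ₁, hθ₁, hθ₁'⟩ := exists_unimodular (μ g₁)
      obtain ⟨θ₂, hθ₂, hθ₂'⟩ := exists_unimodular (μ g₂)
      set g : C(K, ℂ) := θ₁ • g₁ + θ₂ • g₂ with hgdef
      have hmem : ‖μ g‖ ∈ SS μ (f₁ + f₂) := by
        refine ⟨g, fun k => ?_, rfl⟩
        simp only [hgdef, ContinuousMap.add_apply, ContinuousMap.smul_apply, smul_eq_mul]
        calc ‖θ₁ * g₁ k + θ₂ * g₂ k‖ ≤ ‖θ₁ * g₁ k‖ + ‖θ₂ * g₂ k‖ := norm_add_le _ _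
          _ = ‖g₁ k‖ + ‖g₂ k‖ := by rw [norm_mul, norm_mul, hθ₁, hθ₂, one_mul, one_mul]
          _ ≤ (f₁ + f₂) k := by
              simp only [ContinuousMap.add_apply]
              exact add_le_add (hg₁ k) (hg₂ k)
      have hval : ‖μ g‖ = ‖μ g₁‖ + ‖μ g₂‖ := by
        have : μ g = (‖μ g₁‖ : ℂ) + (‖μ g₂‖ : ℂ) := by
          simp only [hgdef, map_add, map_smul, smul_eq_mul, hθ₁', hθ₂']
        rw [this, ← Complex.ofReal_add, Complex.norm_real, Real.norm_eq_abs,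
          abs_of_nonneg (add_nonneg (norm_nonneg _) (norm_nonneg _))]
      calc ‖μ g₁‖ + ‖μ g₂‖ = ‖μ g‖ := hval.symm
        _ ≤ NN μ (f₁ + f₂) := le_csSup (SS_bddAbove μ _) hmem
    have h1 : NN μ f₁ ≤ NN μ (f₁ + f₂) - NN μ f₂ := by
      refine csSup_le ⟨0, SS_zero_mem μ hf₁⟩ fun r₁ hr₁ => ?_
      have h2 : NN μ f₂ ≤ NN μ (f₁ + f₂) - r₁ :=
        csSup_le ⟨0, SS_zero_mem μ hf₂⟩ fun r₂ hr₂ => by linarith [key r₁ hr₁ r₂ hr₂]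
      linarith
    linarith

lemma NN_smul_le (μ : StrongDual ℂ C(K, ℂ)) {c : ℝ} (hc : 0 < c) {f : C(K, ℝ)}
    (hf : ∀ k, 0 ≤ f k) : NN μ (c • f) ≤ c * NN μ f := by
  have hcf : ∀ k, 0 ≤ (c • f) k := fun k => by
    simp only [ContinuousMap.smul_apply, smul_eq_mul]
    exact mul_nonneg hc.le (hf k)
  apply csSup_le ⟨0, SS_zero_mem μ hcf⟩
  rintro r ⟨g, hg, rfl⟩
  set g' : C(K, ℂ) := ((c : ℂ))⁻¹ • g with hg'
  have hgg' : g = (c : ℂ) • g' := by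
    rw [hg', smul_smul, mul_inv_cancel₀ (by exact_mod_cast hc.ne'), one_smul]
  have hmem : ‖μ g'‖ ∈ SS μ f := by
    refine ⟨g', fun k => ?_, rfl⟩
    simp only [hg', ContinuousMap.smul_apply, smul_eq_mul, norm_mul, norm_inv,
      Complex.norm_real, Real.norm_eq_abs, abs_of_nonneg hc.le]
    rw [inv_mul_le_iff₀ hc]
    have := hg k
    simpa [ContinuousMap.smul_apply, smul_eq_mul] using this
  calc ‖μ g‖ = c * ‖μ g'‖ := by
        rw [hgg', map_smul, smul_eq_mul, norm_mul, Complex.norm_real, Real.norm_eq_abs,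
          abs_of_nonneg hc.le]
    _ ≤ c * NN μ f := mul_le_mul_of_nonneg_left (le_csSup (SS_bddAbove μ f) hmem) hc.le

lemma NN_smul (μ : StrongDual ℂ C(K, ℂ)) {c : ℝ} (hc : 0 ≤ c) {f : C(K, ℝ)}
    (hf : ∀ k, 0 ≤ f k) : NN μ (c • f) = c * NN μ f := by
  rcases eq_or_lt_of_le hc with rfl | hc
  · simp [NN_zero]
  · apply le_antisymm (NN_smul_le μ hc hf)
    have h2 : NN μ f ≤ c⁻¹ * NN μ (c • f) := by
      have := NN_smul_le μ (inv_pos.mpr hc) (f := c • f)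
        (fun k => by
          simp only [ContinuousMap.smul_apply, smul_eq_mul]
          exact mul_nonneg hc.le (hf k))
      rw [smul_smul, inv_mul_cancel₀ hc.ne', one_smul] at this
      exact this
    calc c * NN μ f ≤ c * (c⁻¹ * NN μ (c • f)) := mul_le_mul_of_nonneg_left h2 hc.le
      _ = NN μ (c • f) := by field_simp

lemma NN_dual_smul (μ : StrongDual ℂ C(K, ℂ)) (c : ℂ) {f : C(K, ℝ)}
    (hf : ∀ k, 0 ≤ f k) : NN (c • μ) f = ‖c‖ * NN μ f := by
  have happ : ∀ g : C(K, ℂ), (c • μ) g = c * μ g := fun g => by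
    rw [ContinuousLinearMap.smul_apply, smul_eq_mul]
  apply le_antisymm
  · apply csSup_le ⟨0, SS_zero_mem (c • μ) hf⟩
    rintro r ⟨g, hg, rfl⟩
    rw [happ, norm_mul]
    exact mul_le_mul_of_nonneg_left (le_csSup (SS_bddAbove μ f) ⟨g, hg, rfl⟩)
      (norm_nonneg c)
  · by_cases hc : c = 0
    · subst hc
      rw [norm_zero, zero_mul]
      exact NN_nonneg (0 • μ) hf
    · have h2 : NN μ f ≤ ‖c‖⁻¹ * NN (c • μ) f := by
        apply csSup_le ⟨0, SS_zero_mem μ hf⟩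
        rintro r ⟨g, hg, rfl⟩
        have : ‖μ g‖ = ‖c‖⁻¹ * ‖(c • μ) g‖ := by
          rw [happ, norm_mul, inv_mul_cancel_left₀ (norm_ne_zero_iff.mpr hc)]
        rw [this]
        exact mul_le_mul_of_nonneg_left
          (le_csSup (SS_bddAbove (c • μ) f) ⟨g, hg, rfl⟩) (by positivity)
      calc ‖c‖ * NN μ f ≤ ‖c‖ * (‖c‖⁻¹ * NN (c • μ) f) :=
            mul_le_mul_of_nonneg_left h2 (norm_nonneg c)
        _ = NN (c • μ) f := by
            rw [← mul_assoc, mul_inv_cancel₀ (norm_ne_zero_iff.mpr hc), one_mul]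

lemma NN_diff_le (α β : StrongDual ℂ C(K, ℂ)) {f : C(K, ℝ)} (hf : ∀ k, 0 ≤ f k) :
    NN α f ≤ NN β f + ‖α - β‖ * ‖f‖ := by
  apply csSup_le ⟨0, SS_zero_mem α hf⟩
  rintro r ⟨g, hg, rfl⟩
  have hgn : ‖g‖ ≤ ‖f‖ := by
    rw [ContinuousMap.norm_le _ (norm_nonneg f)]
    exact fun k => (hg k).trans ((le_abs_self _).trans (f.norm_coe_le_norm k))
  calc ‖α g‖ = ‖β g + (α - β) g‖ := by
        congr 1
        simp [ContinuousLinearMap.sub_apply]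
    _ ≤ ‖β g‖ + ‖(α - β) g‖ := norm_add_le _ _
    _ ≤ NN β f + ‖α - β‖ * ‖f‖ := by
        apply add_le_add (le_csSup (SS_bddAbove β f) ⟨g, hg, rfl⟩)
        calc ‖(α - β) g‖ ≤ ‖α - β‖ * ‖g‖ := (α - β).le_opNorm g
          _ ≤ ‖α - β‖ * ‖f‖ := mul_le_mul_of_nonneg_left hgn (norm_nonneg _)

lemma max_zero_eq (a : ℝ) : max a 0 = (a + |a|) / 2 := by
  rcases le_total a 0 with h | h
  · rw [max_eq_right h, abs_of_nonpos h]; ring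
  · rw [max_eq_left h, abs_of_nonneg h]; ring

lemma sup_zero_apply (f : C(K, ℝ)) (k : K) : (f ⊔ 0) k = max (f k) 0 := by
  rw [ContinuousMap.sup_apply, ContinuousMap.zero_apply]

lemma sup_zero_nonneg (f : C(K, ℝ)) : ∀ k, 0 ≤ (f ⊔ 0) k := fun k => by
  rw [sup_zero_apply]; exact le_max_right _ _

lemma sup_zero_norm_le (f : C(K, ℝ)) : ‖f ⊔ 0‖ ≤ ‖f‖ := by
  rw [ContinuousMap.norm_le _ (norm_nonneg f)]
  intro k
  have h := f.norm_coe_le_norm k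
  rw [Real.norm_eq_abs] at h
  rw [sup_zero_apply, Real.norm_eq_abs, abs_of_nonneg (le_max_right (f k) 0)]
  exact max_le ((le_abs_self _).trans h) ((abs_nonneg (f k)).trans h)

/-- The real part functional of the modulus. -/
noncomputable def rA (μ : StrongDual ℂ C(K, ℂ)) (f : C(K, ℝ)) : ℝ :=
  NN μ (f ⊔ 0) - NN μ ((-f) ⊔ 0)

lemma NN_add3 (μ : StrongDual ℂ C(K, ℂ)) {a b c : C(K, ℝ)} (ha : ∀ k, 0 ≤ a k)
    (hb : ∀ k, 0 ≤ b k) (hc : ∀ k, 0 ≤ c k) :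
    NN μ (a + b + c) = NN μ a + NN μ b + NN μ c := by
  rw [NN_add μ (fun k => by
      simp only [ContinuousMap.add_apply]; exact add_nonneg (ha k) (hb k)) hc,
    NN_add μ ha hb]

lemma rA_add (μ : StrongDual ℂ C(K, ℂ)) (f g : C(K, ℝ)) :
    rA μ (f + g) = rA μ f + rA μ g := by
  have key : ((f + g) ⊔ 0) + ((-f) ⊔ 0) + ((-g) ⊔ 0)
      = ((-(f + g)) ⊔ 0) + (f ⊔ 0) + (g ⊔ 0) := by
    ext k
    simp only [ContinuousMap.add_apply, sup_zero_apply, ContinuousMap.neg_apply,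
      max_zero_eq, abs_neg]
    ring
  have h1 := NN_add3 μ (sup_zero_nonneg (f + g)) (sup_zero_nonneg (-f)) (sup_zero_nonneg (-g))
  have h2 := NN_add3 μ (sup_zero_nonneg (-(f + g))) (sup_zero_nonneg f) (sup_zero_nonneg g)
  rw [key, h2] at h1
  simp only [rA]
  linarith

lemma rA_neg (μ : StrongDual ℂ C(K, ℂ)) (f : C(K, ℝ)) : rA μ (-f) = - rA μ f := by
  simp [rA, neg_neg]

lemma rA_sub (μ : StrongDual ℂ C(K, ℂ)) (f g : C(K, ℝ)) :
    rA μ (f - g) = rA μ f - rA μ g := by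
  rw [sub_eq_add_neg, rA_add, rA_neg, sub_eq_add_neg]

lemma sup_zero_smul {c : ℝ} (hc : 0 ≤ c) (f : C(K, ℝ)) : (c • f) ⊔ 0 = c • (f ⊔ 0) := by
  ext k
  simp only [sup_zero_apply, ContinuousMap.smul_apply, smul_eq_mul, max_zero_eq,
    abs_mul, abs_of_nonneg hc]
  ring

lemma rA_smul (μ : StrongDual ℂ C(K, ℂ)) (c : ℝ) (f : C(K, ℝ)) :
    rA μ (c • f) = c * rA μ f := by
  rcases le_total 0 c with hc | hc
  · have h1 : (c • f) ⊔ 0 = c • (f ⊔ 0) := sup_zero_smul hc f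
    have h2 : (-(c • f)) ⊔ 0 = c • ((-f) ⊔ 0) := by
      rw [show -(c • f) = c • (-f) by rw [smul_neg]]
      exact sup_zero_smul hc (-f)
    rw [rA, h1, h2, NN_smul μ hc (sup_zero_nonneg f), NN_smul μ hc (sup_zero_nonneg (-f))]
    rw [rA]; ring
  · have hc' : 0 ≤ -c := by linarith
    have h1 : (c • f) ⊔ 0 = (-c) • ((-f) ⊔ 0) := by
      rw [show c • f = (-c) • (-f) by rw [smul_neg, neg_smul, neg_neg]]
      exact sup_zero_smul hc' (-f)
    have h2 : (-(c • f)) ⊔ 0 = (-c) • (f ⊔ 0) := by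
      rw [show -(c • f) = (-c) • f by rw [neg_smul]]
      exact sup_zero_smul hc' f
    rw [rA, h1, h2, NN_smul μ hc' (sup_zero_nonneg (-f)), NN_smul μ hc' (sup_zero_nonneg f)]
    rw [rA]; ring

lemma rA_of_nonneg (μ : StrongDual ℂ C(K, ℂ)) {f : C(K, ℝ)} (hf : ∀ k, 0 ≤ f k) :
    rA μ f = NN μ f := by
  have h1 : f ⊔ 0 = f := by
    ext k; rw [sup_zero_apply, max_eq_left (hf k)]
  have h2 : (-f) ⊔ 0 = 0 := by
    ext k
    rw [sup_zero_apply, ContinuousMap.neg_apply, max_eq_right (neg_nonpos.mpr (hf k)),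
      ContinuousMap.zero_apply]
  rw [rA, h1, h2, NN_zero, sub_zero]

lemma rA_abs_le (μ : StrongDual ℂ C(K, ℂ)) (f : C(K, ℝ)) :
    |rA μ f| ≤ ‖μ‖ * ‖f‖ := by
  rw [rA, abs_sub_le_iff]
  constructor
  · have := NN_le μ (sup_zero_nonneg f)
    have h0 := NN_nonneg μ (sup_zero_nonneg (-f))
    have hb : ‖μ‖ * ‖f ⊔ 0‖ ≤ ‖μ‖ * ‖f‖ :=
      mul_le_mul_of_nonneg_left (sup_zero_norm_le f) (norm_nonneg μ)
    linarith
  · have := NN_le μ (sup_zero_nonneg (-f))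
    have h0 := NN_nonneg μ (sup_zero_nonneg f)
    have hb : ‖μ‖ * ‖(-f) ⊔ 0‖ ≤ ‖μ‖ * ‖f‖ := by
      have := (sup_zero_norm_le (-f)).trans (le_of_eq (norm_neg f))
      exact mul_le_mul_of_nonneg_left this (norm_nonneg μ)
    linarith

lemma rA_dual_smul (μ : StrongDual ℂ C(K, ℂ)) (c : ℂ) (f : C(K, ℝ)) :
    rA (c • μ) f = ‖c‖ * rA μ f := by
  rw [rA, rA, NN_dual_smul μ c (sup_zero_nonneg f), NN_dual_smul μ c (sup_zero_nonneg (-f))]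
  ring

lemma rA_diff_le (α β : StrongDual ℂ C(K, ℂ)) (f : C(K, ℝ)) :
    |rA α f - rA β f| ≤ 2 * ‖α - β‖ * ‖f‖ := by
  have key : ∀ g : C(K, ℝ), ‖g‖ ≤ ‖f‖ → (∀ k, 0 ≤ g k) →
      |NN α g - NN β g| ≤ ‖α - β‖ * ‖f‖ := by
    intro g hgn hgpos
    rw [abs_sub_le_iff]
    constructor
    · have := NN_diff_le α β hgpos
      have hb : ‖α - β‖ * ‖g‖ ≤ ‖α - β‖ * ‖f‖ :=
        mul_le_mul_of_nonneg_left hgn (norm_nonneg _)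
      linarith
    · have := NN_diff_le β α hgpos
      rw [norm_sub_rev] at this
      have hb : ‖α - β‖ * ‖g‖ ≤ ‖α - β‖ * ‖f‖ :=
        mul_le_mul_of_nonneg_left hgn (norm_nonneg _)
      linarith
  have h1 := key (f ⊔ 0) (sup_zero_norm_le f) (sup_zero_nonneg f)
  have h2 := key ((-f) ⊔ 0) ((sup_zero_norm_le (-f)).trans (le_of_eq (norm_neg f)))
    (sup_zero_nonneg (-f))
  rw [abs_sub_le_iff] at h1 h2 ⊢
  simp only [rA]
  constructor <;> linarith [h1.1, h1.2, h2.1, h2.2]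

/-- Real part as a continuous map. -/
noncomputable def reC (f : C(K, ℂ)) : C(K, ℝ) := ⟨fun k => (f k).re, Complex.continuous_re.comp f.continuous⟩

/-- Imaginary part as a continuous map. -/
noncomputable def imC (f : C(K, ℂ)) : C(K, ℝ) := ⟨fun k => (f k).im, Complex.continuous_im.comp f.continuous⟩

/-- Pointwise norm as a continuous map. -/
noncomputable def nrmC (f : C(K, ℂ)) : C(K, ℝ) := ⟨fun k => ‖f k‖, f.continuous.norm⟩

@[simp] lemma reC_apply (f : C(K, ℂ)) (k : K) : reC f k = (f k).re := rfl
@[simp] lemma imC_apply (f : C(K, ℂ)) (k : K) : imC f k = (f k).im := rfl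
@[simp] lemma nrmC_apply (f : C(K, ℂ)) (k : K) : nrmC f k = ‖f k‖ := rfl

lemma reC_add (f g : C(K, ℂ)) : reC (f + g) = reC f + reC g := by
  ext k; simp [ContinuousMap.add_apply]

lemma imC_add (f g : C(K, ℂ)) : imC (f + g) = imC f + imC g := by
  ext k; simp [ContinuousMap.add_apply]

lemma reC_smul (c : ℂ) (f : C(K, ℂ)) :
    reC (c • f) = c.re • reC f - c.im • imC f := by
  ext k
  simp [ContinuousMap.smul_apply, ContinuousMap.sub_apply, Complex.mul_re]

lemma imC_smul (c : ℂ) (f : C(K, ℂ)) :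
    imC (c • f) = c.re • imC f + c.im • reC f := by
  ext k
  simp [ContinuousMap.smul_apply, ContinuousMap.add_apply, Complex.mul_im]

lemma nrmC_norm_le (f : C(K, ℂ)) : ‖nrmC f‖ ≤ ‖f‖ := by
  rw [ContinuousMap.norm_le _ (norm_nonneg f)]
  intro k
  rw [nrmC_apply, Real.norm_eq_abs, abs_of_nonneg (norm_nonneg (f k))]
  exact f.norm_coe_le_norm k

noncomputable def cAbsFun (μ : StrongDual ℂ C(K, ℂ)) (f : C(K, ℂ)) : ℂ :=
  (rA μ (reC f) : ℂ) + Complex.I * (rA μ (imC f) : ℂ)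

lemma cAbsFun_add (μ : StrongDual ℂ C(K, ℂ)) (f g : C(K, ℂ)) :
    cAbsFun μ (f + g) = cAbsFun μ f + cAbsFun μ g := by
  simp only [cAbsFun, reC_add, imC_add, rA_add]
  push_cast
  ring

lemma cAbsFun_smul (μ : StrongDual ℂ C(K, ℂ)) (c : ℂ) (f : C(K, ℂ)) :
    cAbsFun μ (c • f) = c * cAbsFun μ f := by
  simp only [cAbsFun, reC_smul, imC_smul, rA_sub, rA_add, rA_smul]
  apply Complex.ext <;>
    simp [Complex.mul_re, Complex.mul_im, Complex.add_re, Complex.add_im]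
  all_goals ring

lemma cAbsFun_norm_le (μ : StrongDual ℂ C(K, ℂ)) (f : C(K, ℂ)) :
    ‖cAbsFun μ f‖ ≤ ‖μ‖ * ‖f‖ := by
  obtain ⟨θ, hθ, hθ'⟩ := exists_unimodular (cAbsFun μ f)
  have h1 : cAbsFun μ (θ • f) = (‖cAbsFun μ f‖ : ℂ) := by rw [cAbsFun_smul, hθ']
  have h2 : rA μ (reC (θ • f)) = ‖cAbsFun μ f‖ := by
    have := congrArg Complex.re h1
    simpa [cAbsFun] using this
  have h3 : rA μ (reC (θ • f)) ≤ NN μ (nrmC f) := by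
    calc rA μ (reC (θ • f)) ≤ NN μ ((reC (θ • f)) ⊔ 0) := by
          rw [rA]
          have := NN_nonneg μ (sup_zero_nonneg (-(reC (θ • f))))
          linarith
      _ ≤ NN μ (nrmC f) := by
          apply NN_mono μ (sup_zero_nonneg _)
          intro k
          rw [sup_zero_apply, nrmC_apply]
          apply max_le _ (norm_nonneg _)
          calc (reC (θ • f)) k ≤ ‖(θ • f) k‖ := by
                rw [reC_apply]; exact Complex.re_le_norm _
            _ = ‖f k‖ := by
                rw [ContinuousMap.smul_apply, norm_smul, hθ, one_mul]
  have h4 : NN μ (nrmC f) ≤ ‖μ‖ * ‖f‖ :=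
    (NN_le μ (fun k => norm_nonneg (f k))).trans
      (mul_le_mul_of_nonneg_left (nrmC_norm_le f) (norm_nonneg μ))
  rw [← h2] at *
  linarith

/-- The modulus of a functional. -/
noncomputable def cAbs (μ : StrongDual ℂ C(K, ℂ)) : StrongDual ℂ C(K, ℂ) :=
  LinearMap.mkContinuous
    { toFun := cAbsFun μ
      map_add' := cAbsFun_add μ
      map_smul' := fun c f => by simpa using cAbsFun_smul μ c f }
    ‖μ‖ (cAbsFun_norm_le μ)

@[simp] lemma cAbs_apply (μ : StrongDual ℂ C(K, ℂ)) (f : C(K, ℂ)) :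
    cAbs μ f = cAbsFun μ f := rfl

lemma cAbs_norm_le (μ : StrongDual ℂ C(K, ℂ)) : ‖cAbs μ‖ ≤ ‖μ‖ :=
  LinearMap.mkContinuous_norm_le _ (norm_nonneg μ) _

lemma cAbs_norm [Nonempty K] (μ : StrongDual ℂ C(K, ℂ)) : ‖cAbs μ‖ = ‖μ‖ := by
  apply le_antisymm (cAbs_norm_le μ)
  have hone : ‖(1 : C(K, ℂ))‖ = 1 := norm_one
  have h1 : cAbs μ (1 : C(K, ℂ)) = (NN μ (1 : C(K, ℝ)) : ℂ) := by
    have hre : reC (1 : C(K, ℂ)) = (1 : C(K, ℝ)) := by ext k; simp [ContinuousMap.one_apply]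
    have him : imC (1 : C(K, ℂ)) = 0 := by ext k; simp [ContinuousMap.one_apply]
    rw [cAbs_apply, cAbsFun, hre, him]
    rw [show rA μ (0 : C(K, ℝ)) = 0 by
      have := rA_smul μ 0 (0 : C(K, ℝ)); simpa using this]
    rw [rA_of_nonneg μ (fun k => by simp [ContinuousMap.one_apply])]
    simp
  have h2 : ‖μ‖ ≤ NN μ (1 : C(K, ℝ)) := by
    apply ContinuousLinearMap.opNorm_le_bound μ
      (NN_nonneg μ (fun k => by simp [ContinuousMap.one_apply]))
    intro g
    by_cases hg : g = 0
    · simp [hg]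
    · have hgn : (0 : ℝ) < ‖g‖ := norm_pos_iff.mpr hg
      set g' : C(K, ℂ) := ((‖g‖ : ℂ))⁻¹ • g with hg'
      have hmem : ‖μ g'‖ ∈ SS μ (1 : C(K, ℝ)) := by
        refine ⟨g', fun k => ?_, rfl⟩
        rw [hg', ContinuousMap.smul_apply, norm_smul, norm_inv, Complex.norm_real,
          Real.norm_eq_abs, abs_of_nonneg hgn.le, ContinuousMap.one_apply]
        rw [inv_mul_le_iff₀ hgn, mul_one]
        exact g.norm_coe_le_norm k
      have : μ g = (‖g‖ : ℂ) * μ g' := by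
        rw [hg', map_smul, smul_eq_mul, ← mul_assoc,
          mul_inv_cancel₀ (by exact_mod_cast hgn.ne'), one_mul]
      rw [this, norm_mul, Complex.norm_real, Real.norm_eq_abs, abs_of_nonneg hgn.le,
        mul_comm]
      exact mul_le_mul_of_nonneg_right (le_csSup (SS_bddAbove μ _) hmem) hgn.le
  calc ‖μ‖ ≤ NN μ (1 : C(K, ℝ)) := h2
    _ = ‖cAbs μ (1 : C(K, ℂ))‖ := by
        rw [h1, Complex.norm_real, Real.norm_eq_abs,
          abs_of_nonneg (NN_nonneg μ (fun k => by simp [ContinuousMap.one_apply]))]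
    _ ≤ ‖cAbs μ‖ * ‖(1 : C(K, ℂ))‖ := (cAbs μ).le_opNorm _
    _ = ‖cAbs μ‖ := by rw [hone, mul_one]

lemma cAbs_diff_norm_le (α β : StrongDual ℂ C(K, ℂ)) :
    ‖cAbs α - cAbs β‖ ≤ 4 * ‖α - β‖ := by
  apply ContinuousLinearMap.opNorm_le_bound _ (by positivity)
  intro f
  rw [ContinuousLinearMap.sub_apply, cAbs_apply, cAbs_apply, cAbsFun, cAbsFun]
  have h1 := rA_diff_le α β (reC f)
  have h2 := rA_diff_le α β (imC f)
  have hre : ‖reC f‖ ≤ ‖f‖ := by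
    rw [ContinuousMap.norm_le _ (norm_nonneg f)]
    intro k
    rw [reC_apply, Real.norm_eq_abs]
    exact (Complex.abs_re_le_norm _).trans (f.norm_coe_le_norm k)
  have him : ‖imC f‖ ≤ ‖f‖ := by
    rw [ContinuousMap.norm_le _ (norm_nonneg f)]
    intro k
    rw [imC_apply, Real.norm_eq_abs]
    exact (Complex.abs_im_le_norm _).trans (f.norm_coe_le_norm k)
  have e1 : |rA α (reC f) - rA β (reC f)| ≤ 2 * ‖α - β‖ * ‖f‖ :=
    h1.trans (by
      apply mul_le_mul_of_nonneg_left hre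
      positivity)
  have e2 : |rA α (imC f) - rA β (imC f)| ≤ 2 * ‖α - β‖ * ‖f‖ :=
    h2.trans (by
      apply mul_le_mul_of_nonneg_left him
      positivity)
  calc ‖((rA α (reC f) : ℂ) + Complex.I * (rA α (imC f) : ℂ))
        - ((rA β (reC f) : ℂ) + Complex.I * (rA β (imC f) : ℂ))‖
      = ‖((rA α (reC f) - rA β (reC f) : ℝ) : ℂ)
        + Complex.I * ((rA α (imC f) - rA β (imC f) : ℝ) : ℂ)‖ := by
        congr 1
        push_cast
        ring
    _ ≤ ‖((rA α (reC f) - rA β (reC f) : ℝ) : ℂ)‖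
        + ‖Complex.I * ((rA α (imC f) - rA β (imC f) : ℝ) : ℂ)‖ := norm_add_le _ _
    _ ≤ 2 * ‖α - β‖ * ‖f‖ + 2 * ‖α - β‖ * ‖f‖ := by
        apply add_le_add
        · rw [Complex.norm_real, Real.norm_eq_abs]; exact e1
        · rw [norm_mul, Complex.norm_I, one_mul, Complex.norm_real, Real.norm_eq_abs]
          exact e2
    _ = 4 * ‖α - β‖ * ‖f‖ := by ring

lemma cAbs_dual_smul (μ : StrongDual ℂ C(K, ℂ)) (c : ℂ) :
    cAbs (c • μ) = (‖c‖ : ℂ) • cAbs μ := by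
  apply ContinuousLinearMap.ext
  intro f
  rw [ContinuousLinearMap.smul_apply, cAbs_apply, cAbs_apply, cAbsFun, cAbsFun,
    rA_dual_smul, rA_dual_smul, smul_eq_mul]
  push_cast
  ring

lemma le_of_forall_pos' {a b : ℝ} (h : ∀ ε > 0, a ≤ b + ε) : a ≤ b := by
  by_contra hc
  push_neg at hc
  linarith [h ((a - b) / 2) (by linarith)]

/-- The positive weighted composition operator on real functions. -/
noncomputable def TrR (w : C(K, ℂ)) {φ : K → K} (hφc : Continuous φ) (f : C(K, ℝ)) : C(K, ℝ) :=
  ⟨fun k => ‖w k‖ * f (φ k), (w.continuous.norm).mul (f.continuous.comp hφc)⟩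

@[simp] lemma TrR_apply (w : C(K, ℂ)) {φ : K → K} (hφc : Continuous φ) (f : C(K, ℝ)) (k : K) :
    TrR w hφc f k = ‖w k‖ * f (φ k) := rfl

lemma TrR_nonneg (w : C(K, ℂ)) {φ : K → K} (hφc : Continuous φ) {f : C(K, ℝ)}
    (hf : ∀ k, 0 ≤ f k) : ∀ k, 0 ≤ TrR w hφc f k :=
  fun k => mul_nonneg (norm_nonneg _) (hf (φ k))

/-- KEY: the modulus-functional intertwines the weighted composition operator. -/
lemma NN_comp {φ : K → K} (hφc : Continuous φ) (hφi : Function.Injective φ)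
    (w : C(K, ℂ)) (T : C(K, ℂ) →L[ℂ] C(K, ℂ))
    (hT : ∀ (f : C(K, ℂ)) (k : K), T f k = w k * f (φ k))
    (μ : StrongDual ℂ C(K, ℂ)) (f : C(K, ℝ)) (hf : ∀ k, 0 ≤ f k) :
    NN (μ.comp T) f = NN μ (TrR w hφc f) := by
  have hcomp : ∀ g : C(K, ℂ), (μ.comp T) g = μ (T g) := fun g => rfl
  apply le_antisymm
  · apply csSup_le ⟨0, SS_zero_mem _ hf⟩
    rintro r ⟨g, hg, rfl⟩
    rw [hcomp]
    refine le_csSup (SS_bddAbove μ _) ⟨T g, fun k => ?_, rfl⟩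
    rw [hT, TrR_apply, norm_mul]
    exact mul_le_mul_of_nonneg_left (hg (φ k)) (norm_nonneg _)
  · apply csSup_le ⟨0, SS_zero_mem _ (TrR_nonneg w hφc hf)⟩
    rintro r ⟨h, hh, rfl⟩
    apply le_of_forall_pos'
    intro ε hε
    set δ : ℝ := ε / (‖μ‖ * ‖f‖ + 1) with hδdef
    have hδ : 0 < δ := div_pos hε (by positivity)
    -- the approximate division of h by w
    set M : K → ℝ := fun k => max (‖w k‖ ^ 2) (δ ^ 2) with hM
    have hMpos : ∀ k, 0 < M k := fun k =>
      lt_of_lt_of_le (by positivity) (le_max_right _ _)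
    have hMcont : Continuous M := (w.continuous.norm.pow 2).max continuous_const
    set q : C(K, ℂ) := ⟨fun k => ((M k : ℝ) : ℂ)⁻¹ * ((starRingEnd ℂ) (w k) * h k),
      ((Complex.continuous_ofReal.comp hMcont).inv₀
        (fun k => by
          simp only [Function.comp_apply]
          exact_mod_cast (hMpos k).ne')).mul
        ((Complex.continuous_conj.comp w.continuous).mul h.continuous)⟩ with hq
    have hqk : ∀ k, q k = ((M k : ℝ) : ℂ)⁻¹ * ((starRingEnd ℂ) (w k) * h k) :=
      fun k => rfl
    have hqnorm : ∀ k, ‖q k‖ = (M k)⁻¹ * (‖w k‖ * ‖h k‖) := by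
      intro k
      rw [hqk k, norm_mul, norm_mul, norm_inv, Complex.norm_real,
        Real.norm_eq_abs, abs_of_pos (hMpos k), RCLike.norm_conj]
    have hqle : ∀ k, ‖q k‖ ≤ f (φ k) := by
      intro k
      rw [hqnorm k, inv_mul_le_iff₀ (hMpos k)]
      calc ‖w k‖ * ‖h k‖ ≤ ‖w k‖ * (‖w k‖ * f (φ k)) := by
            apply mul_le_mul_of_nonneg_left _ (norm_nonneg _)
            simpa using hh k
        _ = ‖w k‖ ^ 2 * f (φ k) := by ring
        _ ≤ M k * f (φ k) := mul_le_mul_of_nonneg_right (le_max_left _ _) (hf (φ k))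
    have hwq : ∀ k, w k * q k = ((‖w k‖ ^ 2 / M k : ℝ) : ℂ) * h k := by
      intro k
      rw [hqk k]
      have hcc : w k * (starRingEnd ℂ) (w k) = ((‖w k‖ ^ 2 : ℝ) : ℂ) := by
        rw [Complex.mul_conj, Complex.sq_norm]
      calc w k * ((((M k : ℝ) : ℂ))⁻¹ * ((starRingEnd ℂ) (w k) * h k))
          = (w k * (starRingEnd ℂ) (w k)) * (((M k : ℝ) : ℂ))⁻¹ * h k := by ring
        _ = ((‖w k‖ ^ 2 : ℝ) : ℂ) * (((M k : ℝ) : ℂ))⁻¹ * h k := by rw [hcc]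
        _ = ((‖w k‖ ^ 2 / M k : ℝ) : ℂ) * h k := by push_cast; ring
    have hclose : ∀ k, ‖w k * q k - h k‖ ≤ δ * f (φ k) := by
      intro k
      rw [hwq k]
      have hfact : ((‖w k‖ ^ 2 / M k : ℝ) : ℂ) * h k - h k
          = ((‖w k‖ ^ 2 / M k - 1 : ℝ) : ℂ) * h k := by push_cast; ring
      rw [hfact, norm_mul, Complex.norm_real, Real.norm_eq_abs]
      have hle1 : ‖w k‖ ^ 2 / M k ≤ 1 := div_le_one_of_le₀ (le_max_left _ _) (hMpos k).le
      rw [abs_of_nonpos (by linarith), neg_sub]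
      rcases le_total (δ ^ 2) (‖w k‖ ^ 2) with hcase | hcase
      · have hMk : M k = ‖w k‖ ^ 2 := max_eq_left hcase
        have hwpos : (0:ℝ) < ‖w k‖ ^ 2 := lt_of_lt_of_le (by positivity) hcase
        rw [hMk, div_self hwpos.ne']
        simp only [sub_self, zero_mul]
        exact mul_nonneg hδ.le (hf (φ k))
      · have hMk : M k = δ ^ 2 := max_eq_right hcase
        have hwδ : ‖w k‖ ≤ δ := by
          nlinarith [hcase, norm_nonneg (w k), hδ]
        calc (1 - ‖w k‖ ^ 2 / M k) * ‖h k‖ ≤ 1 * ‖h k‖ := by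
              apply mul_le_mul_of_nonneg_right _ (norm_nonneg _)
              have : 0 ≤ ‖w k‖ ^ 2 / M k := by positivity
              linarith
          _ = ‖h k‖ := one_mul _
          _ ≤ ‖w k‖ * f (φ k) := by simpa using hh k
          _ ≤ δ * f (φ k) := mul_le_mul_of_nonneg_right hwδ (hf (φ k))
    -- extend q ∘ φ⁻¹ from the range of φ to all of K
    obtain ⟨G, hG⟩ := ContinuousMap.exists_extension (hφc.isClosedEmbedding hφi) q
    have hGφ : ∀ k, G (φ k) = q k := fun k => by
      have := congrArg (fun (u : C(K, ℂ)) => u k) hG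
      simpa [ContinuousMap.comp_apply] using this
    -- truncate G so that it is dominated by f
    obtain ⟨g, hgle, hgclose⟩ := ratio_smul G
      ⟨fun k => min (f k) ‖G k‖, (f.continuous.min G.continuous.norm)⟩
      (nrmC G)
      (fun k => le_min (hf k) (norm_nonneg _))
      (fun k => min_le_right _ _)
      (fun k => le_refl _)
    have hgq : ∀ k, g (φ k) = q k := by
      intro k
      have h1 := hgclose (φ k)
      have hb : nrmC G (φ k) - (⟨fun k => min (f k) ‖G k‖,
          (f.continuous.min G.continuous.norm)⟩ : C(K, ℝ)) (φ k) = 0 := by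
        show ‖G (φ k)‖ - min (f (φ k)) ‖G (φ k)‖ = 0
        rw [min_eq_right (by rw [hGφ k]; exact hqle k)]
        ring
      rw [hb] at h1
      have h3 := norm_le_zero_iff.mp h1
      rw [sub_eq_zero] at h3
      rw [← h3, hGφ k]
    have hgf : ∀ k, ‖g k‖ ≤ f k := fun k => (hgle k).trans (by
      rw [ContinuousMap.coe_mk]; exact min_le_left _ _)
    -- now compare μ h with μ (T g)
    have hTg : ∀ k, ‖(T g - h) k‖ ≤ δ * ‖f‖ := by
      intro k
      rw [ContinuousMap.sub_apply, hT, hgq k]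
      calc ‖w k * q k - h k‖ ≤ δ * f (φ k) := hclose k
        _ ≤ δ * ‖f‖ := by
            apply mul_le_mul_of_nonneg_left _ hδ.le
            exact (le_abs_self _).trans (f.norm_coe_le_norm (φ k))
    have hTgnorm : ‖T g - h‖ ≤ δ * ‖f‖ := by
      rw [ContinuousMap.norm_le _ (by positivity)]
      exact hTg
    have hmem : ‖μ (T g)‖ ∈ SS (μ.comp T) f := ⟨g, hgf, (by rw [hcomp])⟩
    calc ‖μ h‖ = ‖μ (T g) - μ (T g - h)‖ := by rw [map_sub]; congr 1; abel
      _ ≤ ‖μ (T g)‖ + ‖μ (T g - h)‖ := norm_sub_le _ _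
      _ ≤ NN (μ.comp T) f + ‖μ‖ * (δ * ‖f‖) := by
          apply add_le_add (le_csSup (SS_bddAbove _ _) hmem)
          exact (μ.le_opNorm _).trans (mul_le_mul_of_nonneg_left hTgnorm (norm_nonneg μ))
      _ ≤ NN (μ.comp T) f + ε := by
          have hcancel : δ * (‖μ‖ * ‖f‖ + 1) = ε := by
            rw [hδdef]
            field_simp
          have hb : ‖μ‖ * (δ * ‖f‖) ≤ ε := by nlinarith [hδ.le]
          linarith

lemma TrR_sup_zero (w : C(K, ℂ)) {φ : K → K} (hφc : Continuous φ) (h : C(K, ℝ)) :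
    (TrR w hφc h) ⊔ 0 = TrR w hφc (h ⊔ 0) := by
  ext k
  simp only [sup_zero_apply, TrR_apply, max_zero_eq, abs_mul, abs_norm]
  ring

lemma TrR_neg (w : C(K, ℂ)) {φ : K → K} (hφc : Continuous φ) (h : C(K, ℝ)) :
    -(TrR w hφc h) = TrR w hφc (-h) := by
  ext k
  simp only [ContinuousMap.neg_apply, TrR_apply]
  ring

lemma rA_comp {φ : K → K} (hφc : Continuous φ) (hφi : Function.Injective φ)
    (w : C(K, ℂ)) (T : C(K, ℂ) →L[ℂ] C(K, ℂ))
    (hT : ∀ (f : C(K, ℂ)) (k : K), T f k = w k * f (φ k))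
    (μ : StrongDual ℂ C(K, ℂ)) (h : C(K, ℝ)) :
    rA (μ.comp T) h = rA μ (TrR w hφc h) := by
  rw [rA, rA, NN_comp hφc hφi w T hT μ _ (sup_zero_nonneg h),
    NN_comp hφc hφi w T hT μ _ (sup_zero_nonneg (-h)),
    TrR_sup_zero w hφc h, TrR_neg w hφc h, TrR_sup_zero w hφc (-h)]

lemma cAbs_comp {φ : K → K} (hφc : Continuous φ) (hφi : Function.Injective φ)
    (w : C(K, ℂ)) (T : C(K, ℂ) →L[ℂ] C(K, ℂ))
    (hT : ∀ (f : C(K, ℂ)) (k : K), T f k = w k * f (φ k))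
    (Tabs : C(K, ℂ) →L[ℂ] C(K, ℂ))
    (hTabs : ∀ (f : C(K, ℂ)) (k : K), Tabs f k = (‖w k‖ : ℂ) * f (φ k))
    (μ : StrongDual ℂ C(K, ℂ)) :
    cAbs (μ.comp T) = (cAbs μ).comp Tabs := by
  apply ContinuousLinearMap.ext
  intro f
  have hre : reC (Tabs f) = TrR w hφc (reC f) := by
    ext k
    rw [reC_apply, hTabs f k, TrR_apply, reC_apply]
    simp [Complex.mul_re]
  have him : imC (Tabs f) = TrR w hφc (imC f) := by
    ext k
    rw [imC_apply, hTabs f k, TrR_apply, imC_apply]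
    simp [Complex.mul_im]
  rw [ContinuousLinearMap.comp_apply, cAbs_apply, cAbs_apply, cAbsFun, cAbsFun,
    hre, him, rA_comp hφc hφi w T hT μ (reC f), rA_comp hφc hφi w T hT μ (imC f)]

end Stmt19Aux

open Stmt19Aux in
/-- if `λ ≠ 0` is an approximate eigenvalue of `T' = (w T_φ)'` (witnessed
by unit functionals `μₙ` with `T'μₙ - λμₙ → 0`), then `|λ|` is an approximate eigenvalue
of `|T|'`, where `|T| = |w| T_φ`. -/
theorem stmt19 (K : Type*) [TopologicalSpace K] [CompactSpace K] [T2Space K]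
    (φ : K → K) (hφc : Continuous φ) (hφi : Function.Injective φ)
    (w : C(K, ℂ)) (T : C(K, ℂ) →L[ℂ] C(K, ℂ))
    (hT : ∀ (f : C(K, ℂ)) (k : K), T f k = w k * f (φ k))
    (Tabs : C(K, ℂ) →L[ℂ] C(K, ℂ))
    (hTabs : ∀ (f : C(K, ℂ)) (k : K), Tabs f k = (‖w k‖ : ℂ) * f (φ k))
    (lam : ℂ) (hlam : lam ≠ 0)
    (μs : ℕ → StrongDual ℂ C(K, ℂ))
    (hnorm : ∀ n, ‖μs n‖ = 1)
    (htend : Tendsto (fun n => (μs n).comp T - lam • μs n) atTop (nhds 0)) :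
    ∃ νs : ℕ → StrongDual ℂ C(K, ℂ),
      (∀ n, ‖νs n‖ = 1) ∧
      Tendsto (fun n => (νs n).comp Tabs - (‖lam‖ : ℂ) • νs n) atTop (nhds 0) := by
  rcases isEmpty_or_nonempty K with hK | hK
  · exfalso
    have hzero : μs 0 = 0 := by
      apply ContinuousLinearMap.ext
      intro g
      have : g = 0 := ContinuousMap.ext fun k => hK.elim k
      rw [this]
      simp
    have := hnorm 0
    rw [hzero, norm_zero] at this
    norm_num at this
  refine ⟨fun n => cAbs (μs n), fun n => by rw [cAbs_norm, hnorm n], ?_⟩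
  have hrw : ∀ n, (cAbs (μs n)).comp Tabs - (‖lam‖ : ℂ) • cAbs (μs n)
      = cAbs ((μs n).comp T) - cAbs (lam • μs n) := by
    intro n
    rw [← cAbs_comp hφc hφi w T hT Tabs hTabs (μs n), cAbs_dual_smul (μs n) lam]
  have hbound : ∀ n, ‖(cAbs (μs n)).comp Tabs - (‖lam‖ : ℂ) • cAbs (μs n)‖
      ≤ 4 * ‖(μs n).comp T - lam • μs n‖ := by
    intro n
    rw [hrw n]
    exact cAbs_diff_norm_le _ _
  apply squeeze_zero_norm hbound
  have h1 : Tendsto (fun n => ‖(μs n).comp T - lam • μs n‖) atTop (nhds 0) := by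
    have := htend.norm
    simpa using this
  have := h1.const_mul (4 : ℝ)
  simpa using this
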